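/- Let α be a type with decidable equality and m a multiset over α such that every element has multiplicity at most 2 in m. Then the number of ordered pairs (s, t) of duplicate-free multisets with s + t = m equals 2^k, where k is the number of elements whose multiplicity in m is exactly 1. -/
import Mathlib


/-- If every element has multiplicity at most 2 in `m`, the number of ordered
pairs `(s, t)` of duplicate-free multisets with `s + t = m` is `2 ^ k`, where `k`
is the number of elements of multiplicity exactly 1 in `m`. -/
theorem card_nodup_splits {α : Type*} [DecidableEq α] (m : Multiset α)
    (hm : ∀ a : α, m.count a ≤ 2) :
    Nat.card {p : Multiset α × Multiset α // p.1.Nodup ∧ p.2.Nodup ∧ p.1 + p.2 = m} =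
      2 ^ (m.toFinset.filter fun a => m.count a = 1).card := by
  classical
  set D : Finset α := m.toFinset.filter (fun a => m.count a = 2) with hDdef
  set F : Finset α := m.toFinset.filter (fun a => m.count a = 1) with hFdef
  have hcount : ∀ (S : Finset α) (a : α), S.val.count a = if a ∈ S then 1 else 0 := by
    intro S a
    split
    · exact Multiset.count_eq_one_of_mem S.nodup ‹_›
    · exact Multiset.count_eq_zero.2 ‹_›
  have hFmem : ∀ a, a ∈ F ↔ m.count a = 1 := by
    intro a
    simp only [hFdef, Finset.mem_filter, Multiset.mem_toFinset]
    exact ⟨fun h => h.2, fun h => ⟨Multiset.count_pos.1 (by omega), h⟩⟩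
  have hDmem : ∀ a, a ∈ D ↔ m.count a = 2 := by
    intro a
    simp only [hDdef, Finset.mem_filter, Multiset.mem_toFinset]
    exact ⟨fun h => h.2, fun h => ⟨Multiset.count_pos.1 (by omega), h⟩⟩
  have hDc : ∀ a, D.val.count a = if m.count a = 2 then 1 else 0 := by
    intro a; rw [hcount]; simp only [hDmem]
  -- the equivalence with the powerset of F
  have e : {p : Multiset α × Multiset α // p.1.Nodup ∧ p.2.Nodup ∧ p.1 + p.2 = m} ≃
      {S : Finset α // S ∈ F.powerset} := by
    refine ⟨fun p => ⟨F ∩ p.1.1.toFinset, Finset.mem_powerset.2 Finset.inter_subset_left⟩,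
      fun S => ⟨(D.val + S.1.val, D.val + (F \ S.1).val), ?_, ?_, ?_⟩, ?_, ?_⟩
    · -- Nodup of first component
      rw [Multiset.nodup_iff_count_le_one]
      intro a
      have hsub := Finset.mem_powerset.1 S.2
      have h1 : a ∈ S.1 → m.count a = 1 := fun h => (hFmem a).1 (hsub h)
      rw [Multiset.count_add, hDc, hcount]
      split_ifs with hx hy hy
      · exact absurd (h1 hy) (by omega)
      · omega
      · omega
      · omega
    · -- Nodup of second component
      rw [Multiset.nodup_iff_count_le_one]
      intro a
      have h1 : a ∈ F \ S.1 → m.count a = 1 := fun h => (hFmem a).1 (Finset.mem_sdiff.1 h).1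
      rw [Multiset.count_add, hDc, hcount]
      split_ifs with hx hy hy
      · exact absurd (h1 hy) (by omega)
      · omega
      · omega
      · omega
    · -- sum is m
      ext a
      have hsub := Finset.mem_powerset.1 S.2
      have h1 : a ∈ S.1 → m.count a = 1 := fun h => (hFmem a).1 (hsub h)
      rw [Multiset.count_add, Multiset.count_add, Multiset.count_add, hDc, hcount, hcount]
      by_cases hA : a ∈ S.1
      · have hA' : a ∉ F \ S.1 := fun h => (Finset.mem_sdiff.1 h).2 hA
        simp [hA, hA', h1 hA]
      · by_cases hB : a ∈ F
        · have hB' : a ∈ F \ S.1 := Finset.mem_sdiff.2 ⟨hB, hA⟩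
          have := (hFmem a).1 hB
          simp [hA, hB', this]
        · have hB' : a ∉ F \ S.1 := fun h => hB (Finset.mem_sdiff.1 h).1
          have hc1 : m.count a ≠ 1 := fun h => hB ((hFmem a).2 h)
          have := hm a
          simp only [hA, hB', if_false, add_zero]
          split_ifs with hx
          · omega
          · omega
    · -- left inverse
      rintro ⟨⟨s, t⟩, hs, ht, hsum⟩
      dsimp only at hs ht hsum
      have hs1 := Multiset.nodup_iff_count_le_one.1 hs
      have ht1 := Multiset.nodup_iff_count_le_one.1 ht
      have hsc : ∀ a, s.count a + t.count a = m.count a := by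
        intro a; rw [← Multiset.count_add, hsum]
      apply Subtype.ext
      apply Prod.ext
      · -- first component
        show D.val + (F ∩ s.toFinset).val = s
        ext a
        have hmemiff : a ∈ F ∩ s.toFinset ↔ (m.count a = 1 ∧ 0 < s.count a) := by
          rw [Finset.mem_inter, hFmem, Multiset.mem_toFinset, Multiset.count_pos]
        rw [Multiset.count_add, hDc, hcount]
        simp only [hmemiff]
        have := hm a; have := hs1 a; have := ht1 a; have := hsc a
        split_ifs <;> omega
      · -- second component
        show D.val + (F \ (F ∩ s.toFinset)).val = t
        ext a
        have hmemiff : a ∈ F \ (F ∩ s.toFinset) ↔ (m.count a = 1 ∧ ¬ (m.count a = 1 ∧ 0 < s.count a)) := by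
          rw [Finset.mem_sdiff, Finset.mem_inter, hFmem, Multiset.mem_toFinset, Multiset.count_pos]
        rw [Multiset.count_add, hDc, hcount]
        simp only [hmemiff]
        have := hm a; have := hs1 a; have := ht1 a; have := hsc a
        split_ifs <;> omega
    · -- right inverse
      rintro ⟨S, hS⟩
      have hsub := Finset.mem_powerset.1 hS
      apply Subtype.ext
      show F ∩ (D.val + S.val).toFinset = S
      ext a
      simp only [Finset.mem_inter, Multiset.mem_toFinset, Multiset.mem_add, hFmem]
      constructor
      · rintro ⟨h1, h2 | h2⟩
        · exact absurd ((hDmem a).1 h2) (by omega)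
        · exact h2
      · intro h
        exact ⟨(hFmem a).1 (hsub h), Or.inr h⟩
  rw [Nat.card_congr e, Nat.card_eq_fintype_card, Fintype.card_coe, Finset.card_powerset]
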